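/- Let W ⊆ ℙ¹ be an open set and f : W → ℙ¹ a holomorphic map. Every repelling periodic point of f lies in the Julia set J_F(f); hence J_R(f) ⊆ J_F(f), where J_R(f) is the closure of the set of repelling periodic points of f. -/

import Mathlib

open Topology Filter Metric OnePoint Classical

noncomputable section

abbrev RS := OnePoint ℂ

/-- Read off the finite coordinate of a point of the Riemann sphere (junk value `0` at `∞`). -/
def toC (x : RS) : ℂ := if h : ∃ z : ℂ, x = (z : RS) then h.choose else 0

/-- The standard chart of the Riemann sphere at a point `p`: the identity chart at finite
points, the inversion `z ↦ 1/z` at `∞`. -/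
def rsChart (p : RS) (x : RS) : ℂ :=
  if p = (∞ : RS) then (if x = (∞ : RS) then 0 else (toC x)⁻¹) else toC x

/-- The inverse of the standard chart at `p`. -/
def rsChartSymm (p : RS) (z : ℂ) : RS :=
  if p = (∞ : RS) then (if z = 0 then (∞ : RS) else ((z⁻¹ : ℂ) : RS)) else (z : RS)

/-- A map `f : W → ℙ¹` is holomorphic if it is continuous on `W` and its readings in the
standard charts are analytic. -/
def HolomorphicOnRS (f : RS → RS) (W : Set RS) : Prop :=
  ContinuousOn f W ∧ ∀ x ∈ W,
    AnalyticAt ℂ (fun z : ℂ => rsChart (f x) (f (rsChartSymm x z))) (rsChart x x)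

/-- The family of iterates of `f` is normal on `U`: the iterates, as continuous maps
`U → ℙ¹`, form a relatively compact family in the compact-open topology. -/
def IsNormalOn (f : RS → RS) (U : Set RS) : Prop :=
  ∃ F : ℕ → C(U, RS), (∀ (n : ℕ) (x : U), F n x = f^[n] (x : RS)) ∧
    IsCompact (closure (Set.range F))

/-- The Fatou set of `f : W → ℙ¹`: union of the open sets on which either all iterates stay
in `W` and are normal, or some iterate escapes `ℙ¹ ∖ closure W`. -/
def fatouSet (f : RS → RS) (W : Set RS) : Set RS :=
  ⋃₀ {U : Set RS | IsOpen U ∧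
      ((∀ n : ℕ, f^[n] '' U ⊆ W) ∧ IsNormalOn f U ∨ ∃ n : ℕ, f^[n] '' U ⊆ (closure W)ᶜ)}

/-- The Julia set `J_F(f)` as the non-normality locus. -/
def juliaSet (f : RS → RS) (W : Set RS) : Set RS := (fatouSet f W)ᶜ

/-- The derivative of `f^[n]` at `x`, computed in the standard charts. -/
def iterDerivAt (f : RS → RS) (n : ℕ) (x : RS) : ℂ :=
  deriv (fun z : ℂ => rsChart (f^[n] x) (f^[n] (rsChartSymm x z))) (rsChart x x)

/-- `x` is a repelling periodic point of `f : W → ℙ¹`. -/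
def IsRepellingPeriodic (f : RS → RS) (W : Set RS) (x : RS) : Prop :=
  ∃ n : ℕ, 1 ≤ n ∧ f^[n] x = x ∧ (∀ k : ℕ, f^[k] x ∈ W) ∧ 1 < ‖iterDerivAt f n x‖

/-- The Julia set `J_R(f)`: closure of the set of repelling periodic points. -/
def repJulia (f : RS → RS) (W : Set RS) : Set RS :=
  closure {x : RS | IsRepellingPeriodic f W x}

/-- The small island property: for every `z₀ ∈ ℂ*` there is `r(z₀) > 0` such that every
domain `U` meeting `∂W` contains a set `Ω ⋐ U ∩ W` mapped conformally onto `D(z₀, r(z₀))`. -/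
def SmallIslandProperty (f : RS → RS) (W : Set RS) : Prop :=
  ∀ z₀ : ℂ, z₀ ≠ 0 → ∃ r : ℝ, 0 < r ∧
    ∀ U : Set RS, IsOpen U → IsPreconnected U → (U ∩ frontier W).Nonempty →
      ∃ Ω : Set RS, IsOpen Ω ∧ closure Ω ⊆ U ∩ W ∧ IsCompact (closure Ω) ∧
        Set.BijOn f Ω ((fun z : ℂ => (z : RS)) '' Metric.ball z₀ r)

namespace Stmt3Aux


lemma toC_coe (z : ℂ) : toC (z : RS) = z := by
  have h : ∃ w : ℂ, (z : RS) = (w : RS) := ⟨z, rfl⟩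
  simp only [toC, dif_pos h]
  exact (OnePoint.coe_injective h.choose_spec).symm

lemma toC_infty : toC (∞ : RS) = 0 := by
  have h : ¬ ∃ w : ℂ, (∞ : RS) = (w : RS) := by
    rintro ⟨w, hw⟩; exact (OnePoint.coe_ne_infty w) hw.symm
  simp only [toC, dif_neg h]

def antipode (p : RS) : RS := if p = (∞ : RS) then ((0 : ℂ) : RS) else ∞

lemma self_ne_antipode (p : RS) : p ≠ antipode p := by
  by_cases hp : p = (∞ : RS)
  · simp only [antipode, if_pos hp, hp]
    exact fun h => (OnePoint.coe_ne_infty (0 : ℂ)) h.symm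
  · simpa only [antipode, if_neg hp] using hp

lemma chart_symm (p : RS) (z : ℂ) : rsChart p (rsChartSymm p z) = z := by
  by_cases hp : p = (∞ : RS)
  · by_cases hz : z = 0
    · simp [rsChart, rsChartSymm, hp, hz]
    · have hne : ((z⁻¹ : ℂ) : RS) ≠ (∞ : RS) := OnePoint.coe_ne_infty _
      simp [rsChart, rsChartSymm, hp, hz, hne, toC_coe]
  · simp [rsChart, rsChartSymm, hp, toC_coe]

lemma symm_chart {p x : RS} (h : x ≠ antipode p) : rsChartSymm p (rsChart p x) = x := by
  by_cases hp : p = (∞ : RS)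
  · have hx0 : x ≠ ((0 : ℂ) : RS) := by simpa [antipode, hp] using h
    by_cases hxi : x = (∞ : RS)
    · simp [rsChart, rsChartSymm, hp, hxi]
    · obtain ⟨c, rfl⟩ := OnePoint.ne_infty_iff_exists.mp hxi |>.imp (fun c hc => hc.symm)
      have hc : c ≠ 0 := fun h0 => hx0 (by rw [h0])
      have h1 : toC ((c : RS)) = c := toC_coe c
      have h2 : (c : RS) ≠ (∞ : RS) := OnePoint.coe_ne_infty c
      simp [rsChart, rsChartSymm, hp, h2, h1, hc, inv_eq_zero]
  · have hxi : x ≠ (∞ : RS) := by simpa [antipode, hp] using h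
    obtain ⟨c, rfl⟩ := OnePoint.ne_infty_iff_exists.mp hxi |>.imp (fun c hc => hc.symm)
    simp [rsChart, rsChartSymm, hp, toC_coe]

lemma symm_ne_antipode (p : RS) (z : ℂ) : rsChartSymm p z ≠ antipode p := by
  by_cases hp : p = (∞ : RS)
  · by_cases hz : z = 0
    · simp only [rsChartSymm, antipode, if_pos hp, hz, if_pos rfl]
      exact fun h => (OnePoint.coe_ne_infty (0 : ℂ)) h.symm
    · simp only [rsChartSymm, antipode, if_pos hp, if_neg hz]
      intro h
      exact hz (by simpa [inv_eq_zero] using OnePoint.coe_injective h)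
  · simp only [rsChartSymm, antipode, if_neg hp]
    exact OnePoint.coe_ne_infty z

lemma continuous_symm (p : RS) : Continuous (rsChartSymm p) := by
  by_cases hp : p = (∞ : RS)
  · rw [continuous_iff_continuousAt]
    intro z
    by_cases hz : z = 0
    · subst hz
      have h1 : Tendsto (fun w : ℂ => ((w⁻¹ : ℂ) : RS)) (𝓝[≠] (0 : ℂ)) (𝓝 (∞ : RS)) := by
        refine OnePoint.tendsto_coe_infty.comp ?_
        rw [coclosedCompact_eq_cocompact, ← Metric.cobounded_eq_cocompact]
        exact tendsto_inv₀_nhdsNE_zero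
      have h2 : Tendsto (rsChartSymm p) (𝓝[≠] (0 : ℂ)) (𝓝 (∞ : RS)) := by
        refine h1.congr' ?_
        filter_upwards [self_mem_nhdsWithin] with w hw
        have hw' : w ≠ 0 := hw
        simp [rsChartSymm, hp, hw']
      have h3 : Tendsto (rsChartSymm p) (pure (0 : ℂ)) (𝓝 (∞ : RS)) := by
        have : rsChartSymm p 0 = (∞ : RS) := by simp [rsChartSymm, hp]
        rw [tendsto_pure_left]; intro s hs; rw [this]; exact mem_of_mem_nhds hs
      have : ContinuousAt (rsChartSymm p) 0 := by
        unfold ContinuousAt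
        have hsup : 𝓝 (0 : ℂ) = 𝓝[≠] (0 : ℂ) ⊔ pure 0 := (nhdsNE_sup_pure 0).symm
        rw [hsup]
        have : rsChartSymm p 0 = (∞ : RS) := by simp [rsChartSymm, hp]
        rw [this]
        exact h2.sup h3
      exact this
    · have hbase : ContinuousAt (fun w : ℂ => ((w⁻¹ : ℂ) : RS)) z :=
        (OnePoint.continuous_coe.continuousAt).comp (continuousAt_inv₀ hz)
      refine hbase.congr ?_
      filter_upwards [isOpen_ne.mem_nhds hz] with w hw
      simp [rsChartSymm, hp, hw]
  · have : rsChartSymm p = fun z : ℂ => (z : RS) := funext fun z => by simp [rsChartSymm, hp]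
    rw [this]; exact OnePoint.continuous_coe

lemma continuousAt_chart {p x : RS} (h : x ≠ antipode p) : ContinuousAt (rsChart p) x := by
  by_cases hp : p = (∞ : RS)
  · subst hp
    by_cases hxi : x = (∞ : RS)
    · subst hxi
      rw [OnePoint.continuousAt_infty']
      have hval : rsChart (∞ : RS) (∞ : RS) = 0 := by simp [rsChart]
      rw [hval]
      have hcomp : (fun c : ℂ => rsChart (∞ : RS) ((c : RS))) = fun c : ℂ => c⁻¹ := by
        funext c; simp [rsChart, OnePoint.coe_ne_infty, toC_coe]
      show Tendsto (fun c : ℂ => rsChart (∞ : RS) ((c : RS))) (coclosedCompact ℂ) (𝓝 0)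
      rw [hcomp, coclosedCompact_eq_cocompact, ← Metric.cobounded_eq_cocompact]
      exact tendsto_inv₀_cobounded
    · obtain ⟨c, rfl⟩ := OnePoint.ne_infty_iff_exists.mp hxi |>.imp (fun c hc => hc.symm)
      have hc : c ≠ 0 := by
        intro h0; exact h (by simp [antipode, h0])
      rw [OnePoint.continuousAt_coe]
      have hcomp : (rsChart (∞ : RS) ∘ (fun c : ℂ => (c : RS))) = fun c : ℂ => c⁻¹ := by
        funext w; simp [rsChart, Function.comp, OnePoint.coe_ne_infty, toC_coe]
      rw [hcomp]
      exact continuousAt_inv₀ hc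
  · have hxi : x ≠ (∞ : RS) := by simpa [antipode, hp] using h
    obtain ⟨c, rfl⟩ := OnePoint.ne_infty_iff_exists.mp hxi |>.imp (fun c hc => hc.symm)
    have hchart : rsChart p = toC := by funext w; simp [rsChart, hp]
    rw [hchart, OnePoint.continuousAt_coe]
    have : (toC ∘ (fun c : ℂ => (c : RS))) = id := by funext w; simp [Function.comp, toC_coe]
    rw [this]; exact continuousAt_id

lemma analyticAt_trans_in (p : RS) (z₁ : ℂ) :
    AnalyticAt ℂ (fun z => rsChart (rsChartSymm p z₁) (rsChartSymm p z)) z₁ := by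
  by_cases hp : p = (∞ : RS)
  · by_cases hz : z₁ = 0
    · have : (fun z => rsChart (rsChartSymm p z₁) (rsChartSymm p z)) = fun z => z := by
        funext z
        have : rsChartSymm p z₁ = (∞ : RS) := by simp [rsChartSymm, hp, hz]
        rw [this, ← hp]
        exact chart_symm p z
      rw [this]; exact analyticAt_id
    · have hy : rsChartSymm p z₁ = ((z₁⁻¹ : ℂ) : RS) := by simp [rsChartSymm, hp, hz]
      have : (fun z => rsChart (rsChartSymm p z₁) (rsChartSymm p z)) = fun z : ℂ => z⁻¹ := by
        funext z
        rw [hy]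
        by_cases hz0 : z = 0
        · simp [rsChartSymm, rsChart, hp, hz0, OnePoint.coe_ne_infty, toC_infty]
        · simp [rsChartSymm, rsChart, hp, hz0, OnePoint.coe_ne_infty, toC_coe]
      rw [this]
      exact (analyticAt_id (𝕜 := ℂ)).inv hz
  · have : (fun z => rsChart (rsChartSymm p z₁) (rsChartSymm p z)) = fun z => z := by
      funext z
      have h1 : rsChartSymm p z₁ = ((z₁ : ℂ) : RS) := by simp [rsChartSymm, hp]
      have h2 : rsChartSymm p z = ((z : ℂ) : RS) := by simp [rsChartSymm, hp]
      rw [h1, h2]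
      simp [rsChart, OnePoint.coe_ne_infty, toC_coe]
    rw [this]; exact analyticAt_id

lemma analyticAt_trans_out {p q : RS} (h : q ≠ antipode p) :
    AnalyticAt ℂ (fun w => rsChart p (rsChartSymm q w)) (rsChart q q) := by
  by_cases hp : p = (∞ : RS)
  · by_cases hq : q = (∞ : RS)
    · have : (fun w => rsChart p (rsChartSymm q w)) = fun w => w := by
        funext w; rw [hp, ← hq]; exact chart_symm q w
      rw [this]; exact analyticAt_id
    · obtain ⟨c, rfl⟩ := OnePoint.ne_infty_iff_exists.mp hq |>.imp (fun c hc => hc.symm)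
      have hc : c ≠ 0 := by
        intro h0; exact h (by simp [antipode, hp, h0])
      have hfun : (fun w => rsChart p (rsChartSymm ((c : ℂ) : RS) w)) = fun w : ℂ => w⁻¹ := by
        funext w
        simp [rsChart, rsChartSymm, hp, OnePoint.coe_ne_infty, toC_coe]
      have hpt : rsChart ((c : ℂ) : RS) ((c : ℂ) : RS) = c := by
        simp [rsChart, OnePoint.coe_ne_infty, toC_coe]
      rw [hfun, hpt]
      exact (analyticAt_id (𝕜 := ℂ)).inv hc
  · by_cases hq : q = (∞ : RS)
    · exfalso; rw [hq] at h; exact h (by simp [antipode, hp])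
    · have : (fun w => rsChart p (rsChartSymm q w)) = fun w => w := by
        funext w
        simp [rsChart, rsChartSymm, hp, hq, OnePoint.coe_ne_infty, toC_coe]
      rw [this]; exact analyticAt_id



variable {f : RS → RS} {W U : Set RS}

lemma contOn_iter (hf : ContinuousOn f W) (hU1 : ∀ m y, y ∈ U → f^[m] y ∈ W) :
    ∀ m, ContinuousOn (f^[m]) U := by
  intro m
  induction m with
  | zero => simpa using continuousOn_id
  | succ m ih =>
    rw [Function.iterate_succ']
    exact hf.comp ih (fun y hy => hU1 m y hy)

lemma step1 (hf : HolomorphicOnRS f W) (hUopen : IsOpen U)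
    (hU1 : ∀ m y, y ∈ U → f^[m] y ∈ W) :
    ∀ m, ∀ y ∈ U, AnalyticAt ℂ
      (fun z => rsChart (f^[m] y) (f^[m] (rsChartSymm y z))) (rsChart y y) := by
  intro m
  induction m with
  | zero =>
    intro y hy
    have : (fun z => rsChart (f^[0] y) (f^[0] (rsChartSymm y z))) = fun z => z := by
      funext z; simp [chart_symm]
    rw [this]; exact analyticAt_id
  | succ m ih =>
    intro y hy
    set p := f^[m] y with hp
    have hpW : p ∈ W := hU1 m y hy
    have hA : AnalyticAt ℂ (fun w => rsChart (f p) (f (rsChartSymm p w))) (rsChart p p) :=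
      hf.2 p hpW
    have hH := ih y hy
    have hHval : rsChart p (f^[m] (rsChartSymm y (rsChart y y))) = rsChart p p := by
      rw [symm_chart (self_ne_antipode y)]
    have hcomp : AnalyticAt ℂ
        ((fun w => rsChart (f p) (f (rsChartSymm p w))) ∘
          (fun z => rsChart p (f^[m] (rsChartSymm y z)))) (rsChart y y) := by
      refine AnalyticAt.comp ?_ hH
      rw [hHval]; exact hA
    refine hcomp.congr ?_
    have hcontψ : ContinuousAt (rsChartSymm y) (rsChart y y) := (continuous_symm y).continuousAt
    have hψval : rsChartSymm y (rsChart y y) = y := symm_chart (self_ne_antipode y)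
    have hciter : ContinuousAt (f^[m]) y :=
      (contOn_iter hf.1 hU1 m).continuousAt (hUopen.mem_nhds hy)
    have hc : ContinuousAt (fun z => f^[m] (rsChartSymm y z)) (rsChart y y) := by
      refine ContinuousAt.comp ?_ hcontψ
      rw [hψval]; exact hciter
    have hval : f^[m] (rsChartSymm y (rsChart y y)) = p := by rw [hψval]
    have hev : ∀ᶠ z in 𝓝 (rsChart y y), f^[m] (rsChartSymm y z) ≠ antipode p := by
      have : {w : RS | w ≠ antipode p} ∈ 𝓝 (f^[m] (rsChartSymm y (rsChart y y))) := by
        rw [hval]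
        exact compl_singleton_mem_nhds (self_ne_antipode p)
      exact hc.eventually_mem this
    filter_upwards [hev] with z hz
    simp only [Function.comp_apply]
    rw [symm_chart hz, Function.iterate_succ_apply' f m, ← hp,
      Function.iterate_succ_apply' f m]

lemma key (hf : HolomorphicOnRS f W) (hUopen : IsOpen U)
    (hU1 : ∀ m y, y ∈ U → f^[m] y ∈ W)
    (m : ℕ) (b : RS) (z₁ : ℂ) (hmem : rsChartSymm b z₁ ∈ U)
    (hq : f^[m] (rsChartSymm b z₁) ≠ antipode b) :
    AnalyticAt ℂ (fun z => rsChart b (f^[m] (rsChartSymm b z))) z₁ := by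
  set y := rsChartSymm b z₁ with hy
  set q := f^[m] y with hqdef
  have hTin : AnalyticAt ℂ (fun z => rsChart y (rsChartSymm b z)) z₁ := analyticAt_trans_in b z₁
  have hH := step1 hf hUopen hU1 m y hmem
  have hTout : AnalyticAt ℂ (fun w => rsChart b (rsChartSymm q w)) (rsChart q q) :=
    analyticAt_trans_out hq
  have hψy : rsChartSymm y (rsChart y y) = y := symm_chart (self_ne_antipode y)
  have hTin_val : rsChart y (rsChartSymm b z₁) = rsChart y y := rfl
  have hH_val : rsChart q (f^[m] (rsChartSymm y (rsChart y y))) = rsChart q q := by rw [hψy]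
  have hcomp : AnalyticAt ℂ
      ((fun w => rsChart b (rsChartSymm q w)) ∘
        ((fun w => rsChart q (f^[m] (rsChartSymm y w))) ∘
          (fun z => rsChart y (rsChartSymm b z)))) z₁ := by
    refine AnalyticAt.comp ?_ (AnalyticAt.comp ?_ hTin)
    · simp only [Function.comp_apply, hTin_val, hH_val]; exact hTout
    · rw [hTin_val]; exact hH
  refine hcomp.congr ?_
  have hcψ : ContinuousAt (rsChartSymm b) z₁ := (continuous_symm b).continuousAt
  have hev1 : ∀ᶠ z in 𝓝 z₁, rsChartSymm b z ∈ {w : RS | w ≠ antipode y} := by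
    refine hcψ.eventually_mem ?_
    have : {w : RS | w ≠ antipode y} ∈ 𝓝 y := compl_singleton_mem_nhds (self_ne_antipode y)
    exact this
  have hciter : ContinuousAt (f^[m]) y :=
    (contOn_iter hf.1 hU1 m).continuousAt (hUopen.mem_nhds hmem)
  have hc2 : ContinuousAt (fun z => f^[m] (rsChartSymm b z)) z₁ := by
    refine ContinuousAt.comp ?_ hcψ
    exact hciter
  have hev2 : ∀ᶠ z in 𝓝 z₁, f^[m] (rsChartSymm b z) ∈ {w : RS | w ≠ antipode q} := by
    refine hc2.eventually_mem ?_
    have : {w : RS | w ≠ antipode q} ∈ 𝓝 q := compl_singleton_mem_nhds (self_ne_antipode q)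
    exact this
  filter_upwards [hev1, hev2] with z h1 h2
  simp only [Function.comp_apply]
  rw [symm_chart h1, symm_chart h2]



variable {f : RS → RS} {W U : Set RS}

lemma deriv_pow (hf : HolomorphicOnRS f W) (hUopen : IsOpen U)
    (hU1 : ∀ m y, y ∈ U → f^[m] y ∈ W)
    {x : RS} (hxU : x ∈ U) {n : ℕ} (hfix : f^[n] x = x) :
    ∀ k : ℕ, deriv (fun z => rsChart x (f^[n * k] (rsChartSymm x z))) (rsChart x x)
      = (iterDerivAt f n x) ^ k := by
  have hψ : rsChartSymm x (rsChart x x) = x := symm_chart (self_ne_antipode x)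
  have hbase : ∀ j : ℕ, f^[n * j] x = x := fun j => by
    rw [Function.iterate_mul]; exact Function.iterate_fixed hfix j
  intro k
  induction k with
  | zero =>
    have : (fun z => rsChart x (f^[n * 0] (rsChartSymm x z))) = fun z : ℂ => z := by
      funext z; simp [chart_symm]
    rw [this, pow_zero]
    exact deriv_id _
  | succ k ih =>
    set z₀ := rsChart x x with hz₀
    set g : ℂ → ℂ := fun z => rsChart x (f^[n * k] (rsChartSymm x z)) with hg
    set h : ℂ → ℂ := fun z => rsChart x (f^[n] (rsChartSymm x z)) with hh
    have hgz₀ : g z₀ = z₀ := by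
      simp only [hg, hψ, hbase k]; rfl
    have hdg : DifferentiableAt ℂ g z₀ :=
      (key hf hUopen hU1 (n * k) x z₀ (by rw [hψ]; exact hxU)
        (by rw [hψ, hbase k]; exact self_ne_antipode x)).differentiableAt
    have hdh : DifferentiableAt ℂ h z₀ :=
      (key hf hUopen hU1 n x z₀ (by rw [hψ]; exact hxU)
        (by rw [hψ, hfix]; exact self_ne_antipode x)).differentiableAt
    have hc : ContinuousAt (fun z => f^[n * k] (rsChartSymm x z)) z₀ := by
      refine ContinuousAt.comp ?_ (continuous_symm x).continuousAt
      rw [hψ]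
      exact (contOn_iter hf.1 hU1 (n * k)).continuousAt (hUopen.mem_nhds hxU)
    have hev : ∀ᶠ z in 𝓝 z₀, f^[n * k] (rsChartSymm x z) ∈ {w : RS | w ≠ antipode x} := by
      refine hc.eventually_mem ?_
      have hval : f^[n * k] (rsChartSymm x z₀) = x := by rw [hψ, hbase k]
      rw [hval]
      have : {w : RS | w ≠ antipode x} ∈ 𝓝 x := compl_singleton_mem_nhds (self_ne_antipode x)
      exact this
    have hevEq : (fun z => rsChart x (f^[n * (k + 1)] (rsChartSymm x z))) =ᶠ[𝓝 z₀] (h ∘ g) := by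
      filter_upwards [hev] with z hz
      have hnk : n * (k + 1) = n + n * k := by ring
      simp only [Function.comp_apply, hh, hg]
      rw [symm_chart hz, hnk, Function.iterate_add_apply]
    rw [hevEq.deriv_eq, deriv_comp z₀ (by rw [hgz₀]; exact hdh) hdg, hgz₀, ih]
    have hlam : deriv h z₀ = iterDerivAt f n x := by
      simp only [iterDerivAt, hfix, hh, hz₀]
    rw [hlam, pow_succ]
    ring

lemma equicont (hUopen : IsOpen U) {x : RS} (hxU : x ∈ U)
    {F : ℕ → C(U, RS)} (hK : IsCompact (closure (Set.range F)))
    {N : Set RS} (hN : N ∈ 𝓝 x) :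
    ∃ V ∈ 𝓝 (⟨x, hxU⟩ : U),
      ∀ h ∈ closure (Set.range F), h ⟨x, hxU⟩ = x → ∀ y ∈ V, h y ∈ N := by
  letI : LocallyCompactSpace U := hUopen.locallyCompactSpace
  set A : Set C(U, RS) := closure (Set.range F) ∩ {h : C(U, RS) | h ⟨x, hxU⟩ = x} with hA
  have hAcomp : IsCompact A :=
    hK.inter_right (isClosed_eq (continuous_eval_const _) continuous_const)
  have hcov : ∀ h ∈ A, ∃ O : Set C(U, RS), ∃ V : Set U,
      O ∈ 𝓝 h ∧ V ∈ 𝓝 (⟨x, hxU⟩ : U) ∧ ∀ g ∈ O, ∀ y ∈ V, g y ∈ N := by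
    intro h hh
    have hval : h ⟨x, hxU⟩ = x := hh.2
    have hc : ContinuousAt (fun p : C(U, RS) × U => p.1 p.2) (h, ⟨x, hxU⟩) :=
      continuous_eval.continuousAt
    have hpre : (fun p : C(U, RS) × U => p.1 p.2) ⁻¹' N ∈ 𝓝 ((h, (⟨x, hxU⟩ : U))) := by
      apply hc
      show N ∈ 𝓝 (h ⟨x, hxU⟩)
      rw [hval]; exact hN
    rw [mem_nhds_prod_iff] at hpre
    obtain ⟨O, hO, V, hV, hOV⟩ := hpre
    exact ⟨O, V, hO, hV, fun g hg y hy => hOV (Set.mk_mem_prod hg hy)⟩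
  choose! O V hO hV hprop using hcov
  obtain ⟨t, hcover⟩ := hAcomp.elim_nhds_subcover' (fun h _ => O h)
    (fun h hh => hO h hh)
  refine ⟨⋂ h ∈ t, V h, ?_, ?_⟩
  · exact (Filter.biInter_finset_mem t).mpr fun h hh => hV h h.2
  · intro g hgcl hgx y hy
    have hgA : g ∈ A := ⟨hgcl, hgx⟩
    obtain ⟨h, hht, hgO⟩ := Set.mem_iUnion₂.mp (hcover hgA)
    exact hprop h h.2 g hgO y (Set.mem_iInter₂.mp hy h hht)

end Stmt3Aux

open Stmt3Aux

/-- repelling periodic points lie in the Julia set, hence `J_R(f) ⊆ J_F(f)`. -/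
theorem stmt3 (f : RS → RS) (W : Set RS) (hW : IsOpen W) (hf : HolomorphicOnRS f W) :
    (∀ x : RS, IsRepellingPeriodic f W x → x ∈ juliaSet f W) ∧
    repJulia f W ⊆ juliaSet f W := by
  have main : ∀ x : RS, IsRepellingPeriodic f W x → x ∈ juliaSet f W := by
    intro x hrep
    obtain ⟨n, hn1, hfix, horb, hder⟩ := hrep
    simp only [juliaSet, Set.mem_compl_iff]
    intro hx
    obtain ⟨U, ⟨hUopen, hcase⟩, hxU⟩ := hx
    rcases hcase with ⟨hU1img, F, hF, hK⟩ | ⟨m, hm⟩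
    swap
    · exact (hm ⟨x, hxU, rfl⟩) (subset_closure (horb m))
    have hU1 : ∀ m y, y ∈ U → f^[m] y ∈ W := fun m y hy => hU1img m ⟨y, hy, rfl⟩
    set z₀ := rsChart x x with hz₀def
    have hψ : rsChartSymm x z₀ = x := symm_chart (self_ne_antipode x)
    have hbase : ∀ j : ℕ, f^[n * j] x = x := fun j => by
      rw [Function.iterate_mul]; exact Function.iterate_fixed hfix j
    set N : Set RS := rsChart x ⁻¹' ball z₀ 1 ∩ {w : RS | w ≠ antipode x} with hNdef
    have hNmem : N ∈ 𝓝 x := by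
      refine Filter.inter_mem ?_ ?_
      · refine (continuousAt_chart (self_ne_antipode x)).preimage_mem_nhds ?_
        exact ball_mem_nhds _ one_pos
      · exact compl_singleton_mem_nhds (self_ne_antipode x)
    obtain ⟨V, hVmem, hVprop⟩ := equicont hUopen hxU hK hNmem
    rw [mem_nhds_subtype] at hVmem
    obtain ⟨u, hu, husub⟩ := hVmem
    have huU : u ∩ U ∈ 𝓝 x := Filter.inter_mem hu (hUopen.mem_nhds hxU)
    have hpre : rsChartSymm x ⁻¹' (u ∩ U) ∈ 𝓝 z₀ := by
      refine (continuous_symm x).continuousAt.preimage_mem_nhds ?_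
      rw [hψ]; exact huU
    obtain ⟨δ, hδ, hball⟩ := Metric.mem_nhds_iff.mp hpre
    have hmemU : ∀ z ∈ ball z₀ δ, rsChartSymm x z ∈ U := fun z hz => (hball hz).2
    have horbN : ∀ k : ℕ, ∀ z ∈ ball z₀ δ, f^[n * k] (rsChartSymm x z) ∈ N := by
      intro k z hz
      have h2 : (⟨rsChartSymm x z, (hball hz).2⟩ : U) ∈ V := husub (hball hz).1
      have h3 := hVprop (F (n * k)) (subset_closure (Set.mem_range_self _))
        (by rw [hF]; exact hbase k) _ h2
      rwa [hF] at h3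
    have hbound : ∀ k : ℕ, ‖iterDerivAt f n x‖ ^ k ≤ 1 / δ := by
      intro k
      set g : ℂ → ℂ := fun z => rsChart x (f^[n * k] (rsChartSymm x z)) with hgdef
      have hd : DifferentiableOn ℂ g (ball z₀ δ) := by
        intro z hz
        exact (key hf hUopen hU1 (n * k) x z (hmemU z hz)
          ((horbN k z hz).2)).differentiableAt.differentiableWithinAt
      have hgz₀ : g z₀ = z₀ := by
        simp only [hgdef, hψ, hbase k]; rfl
      have hmaps : Set.MapsTo g (ball z₀ δ) (ball (g z₀) 1) := by
        rw [hgz₀]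
        intro z hz
        exact (horbN k z hz).1
      have hS := Complex.norm_deriv_le_div_of_mapsTo_ball hd (hmaps.mono_right ball_subset_closedBall) hδ
      rw [deriv_pow hf hUopen hU1 hxU hfix k] at hS
      calc ‖iterDerivAt f n x‖ ^ k = ‖iterDerivAt f n x ^ k‖ := (norm_pow _ _).symm
        _ ≤ 1 / δ := hS
    obtain ⟨k, hk⟩ := pow_unbounded_of_one_lt (1 / δ) hder
    exact absurd (hbound k) (not_le.mpr hk)
  refine ⟨main, ?_⟩
  have hclosed : IsClosed (juliaSet f W) :=
    (isOpen_sUnion fun U hU => hU.1).isClosed_compl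
  exact closure_minimal (fun x hx => main x hx) hclosed
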